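/- Let K be a field of characteristic p > 0 with [K : K^p] = c finite, and let L/K be an algebraic extension. Then [L : L^p] ≤ c. -/

import Mathlib

open Cardinal Subfield

/-- For a finite extension `M/K` in characteristic `p`, `[M : M^p] = [K : K^p]`. -/
theorem keyFin14 (p : ℕ) [Fact p.Prime] (K M : Type*) [Field K] [Field M]
    [CharP K p] [CharP M p] [Algebra K M] [FiniteDimensional K M] (c : ℕ)
    (hc : Module.rank (frobenius K p).fieldRange K = c) :
    Module.rank (frobenius M p).fieldRange M = c := by
  set f : K →+* M := algebraMap K M with hf
  set φ : M →+* M := frobenius M p with hφ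
  set S : Subfield K := (frobenius K p).fieldRange with hS
  set A : Subfield M := f.fieldRange with hA
  set B : Subfield M := φ.fieldRange with hB
  set A₀ : Subfield M := A.map φ with hA₀
  have hcomm : ∀ x : K, φ (f x) = f (frobenius K p x) := fun x =>
    (RingHom.map_frobenius f p x).symm
  have eqT : (⊤ : Subfield M).map φ = B := (φ.fieldRange_eq_map).symm
  have eqTK : (⊤ : Subfield K).map f = A := (f.fieldRange_eq_map).symm
  have eqS : S.map f = A₀ := by
    ext y
    constructor
    · rintro ⟨_, ⟨x, rfl⟩, rfl⟩
      exact ⟨f x, ⟨x, rfl⟩, hcomm x⟩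
    · rintro ⟨_, ⟨x, rfl⟩, rfl⟩
      exact ⟨frobenius K p x, ⟨x, rfl⟩, (hcomm x).symm⟩
  have h1 : A₀ ≤ A := by
    rintro _ ⟨_, ⟨x, rfl⟩, rfl⟩
    exact ⟨x ^ p, by simp [hφ, frobenius_def, ← map_pow]⟩
  have h2 : A₀ ≤ B := by
    rintro _ ⟨y, _, rfl⟩
    exact ⟨y, rfl⟩
  -- relrank A₀ A = c
  have hc' : relrank A₀ A = (c : Cardinal) := by
    have := lift_relrank_map_map S ⊤ f
    rw [eqS, eqTK, relrank_top_right, hc, lift_natCast] at this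
    exact lift_eq_nat_iff.mp this
  -- relrank A₀ B = relrank A ⊤
  have hn : relrank A₀ B = relrank A ⊤ := by
    have := relrank_map_map A ⊤ φ
    rwa [eqT] at this
  set n : Cardinal := relrank A ⊤ with hndef
  set x : Cardinal := relrank B ⊤ with hxdef
  have tower1 : (c : Cardinal) * n = relrank A₀ ⊤ := by
    rw [← hc']; exact relrank_mul_relrank h1 le_top
  have tower2 : n * x = relrank A₀ ⊤ := by
    rw [← hn]; exact relrank_mul_relrank h2 le_top
  -- n is finite and nonzero
  have hnrank : n = Module.rank A M := relrank_top_right A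
  have hn0 : n ≠ 0 := by
    rw [hnrank]
    exact (rank_pos).ne'
  have hnfin : n < ℵ₀ := by
    rw [hnrank]
    refine lt_of_le_of_lt ?_ (Module.rank_lt_aleph0 K M)
    refine rank_le_of_injective_injective (fun r : K => (⟨f r, ⟨r, rfl⟩⟩ : A))
      (AddMonoidHom.id M) ?_ (fun a b h => h) ?_
    · intro r hr
      have : f r = 0 := congrArg Subtype.val hr
      exact (map_eq_zero f).mp this
    · intro r m
      simp only [AddMonoidHom.id_apply]
      rw [Subfield.smul_def, Algebra.smul_def]
      simp [Algebra.smul_def]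
      exact Or.inl rfl
  -- x is finite
  have hxfin : x < ℵ₀ := by
    calc x ≤ n * x := le_mul_left hn0
    _ = (c : Cardinal) * n := by rw [tower1, tower2]
    _ < ℵ₀ := by
        apply mul_lt_aleph0 (nat_lt_aleph0 c) hnfin
  obtain ⟨nm, hnm⟩ := lt_aleph0.1 hnfin
  obtain ⟨xm, hxm⟩ := lt_aleph0.1 hxfin
  have key : nm * xm = c * nm := by
    have := tower2.trans tower1.symm
    rw [hnm, hxm] at this
    exact_mod_cast this
  have hnm0 : 0 < nm := by
    rw [hnm] at hn0
    exact Nat.pos_of_ne_zero (by exact_mod_cast hn0)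
  have : xm = c := by
    have := key.trans (Nat.mul_comm c nm)
    exact Nat.eq_of_mul_eq_mul_left hnm0 this
  have goal : x = (c : Cardinal) := by rw [hxm, this]
  rw [← relrank_top_right]
  exact goal

set_option synthInstance.maxHeartbeats 1000000 in
set_option maxHeartbeats 1000000 in
/-- If `K` is a field of characteristic `p` with `[K : K^p] = c` finite and `L/K` is an
algebraic extension, then `[L : L^p] ≤ c`. -/
theorem stmt14 (p : ℕ) [Fact p.Prime] (K L : Type*) [Field K] [Field L]
    [CharP K p] [CharP L p] [Algebra K L] [Algebra.IsAlgebraic K L] (c : ℕ)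
    (hc : Module.rank (frobenius K p).fieldRange K = c) :
    Module.rank (frobenius L p).fieldRange L ≤ c := by
  apply rank_le
  intro s li
  haveI : Finite ((s : Set L) : Set L) := s.finite_toSet
  let Mf := IntermediateField.adjoin K ((s : Set L))
  have hint : ∀ x ∈ (s : Set L), IsIntegral K x := fun x _ =>
    (Algebra.IsAlgebraic.isAlgebraic x).isIntegral
  haveI : FiniteDimensional K Mf := IntermediateField.finiteDimensional_adjoin hint
  have key := keyFin14 p K Mf c hc
  have hmem : ∀ x : s, (x : L) ∈ Mf := fun x => IntermediateField.subset_adjoin K _ x.2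
  let v : s → Mf := fun x => ⟨x, hmem x⟩
  have liM : LinearIndependent (frobenius Mf p).fieldRange v := by
    rw [linearIndependent_iff']
    intro t g hg i hi
    -- coefficients mapped into L
    have hmemB : ∀ j : s, ((g j : Mf) : L) ∈ (frobenius L p).fieldRange := by
      intro j
      obtain ⟨z, hz⟩ := (g j).2
      exact ⟨(z : L), by rw [← hz]; exact ((algebraMap Mf L).map_frobenius p z).symm⟩
    let g' : s → (frobenius L p).fieldRange := fun j => ⟨((g j : Mf) : L), hmemB j⟩
    have hsum : ∑ j ∈ t, g' j • ((j : s) : L) = 0 := by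
      have := congrArg (algebraMap Mf L) hg
      rw [map_sum, map_zero] at this
      rw [← this]
      refine Finset.sum_congr rfl fun j _ => ?_
      rw [Subfield.smul_def, smul_eq_mul, Subfield.smul_def, smul_eq_mul, map_mul]
      rfl
    have hz := linearIndependent_iff'.mp li t g' hsum i hi
    have hgi : ((g i : Mf) : L) = 0 := congrArg Subtype.val hz
    refine Subtype.ext ((algebraMap (↥Mf) L).injective ?_)
    simpa using hgi
  have hcard := liM.cardinal_le_rank
  rw [key, Cardinal.mk_coe_finset] at hcard
  exact_mod_cast hcard
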